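/- Let p > 2 and let (w_n)_{n∈ℕ} be a sequence in (0,1]. Let 𝒫 = {(P₁,W₁), (P₂,W₂)} be the family of partition–weight pairs on ℕ where P₁ = {{n} : n ∈ ℕ} is the discrete partition with constant weight W₁ ≡ 1 and P₂ = {ℕ} is the indiscrete partition with weight W₂ = (w_n) (so that ‖a‖_𝒫 = max{(Σ_n |a_n|^p)^{1/p}, (Σ_n |a_n|² w_n²)^{1/2}} is the norm of Rosenthal's space X_{p,(w_n)}). Then the envelope norm generated by 𝒫 satisfies, for every a = (a_n) ∈ ℝ^ℕ: |||a||| = sup_{q⊆ℕ} (Σ_{n∈q} |a_n|^p + (Σ_{n∉q} |a_n|² w_n²)^{p/2})^{1/p}. -/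

import Mathlib

open scoped ENNReal
open MeasureTheory Filter

noncomputable section

variable {α : Type*}

/-- `P` is a partition of the type `α`: a collection of pairwise disjoint
nonempty subsets of `α` whose union is all of `α`. -/
def IsPartition (P : Set (Set α)) : Prop :=
  (∀ N ∈ P, N.Nonempty) ∧ P.PairwiseDisjoint id ∧ ⋃₀ P = Set.univ

/-- A weight function takes values in `(0,1]`. -/
def IsWeight (W : α → ℝ) : Prop := ∀ a, W a ∈ Set.Ioc (0 : ℝ) 1

/-- `‖x‖_{P,W} = (Σ_{N∈P} (Σ_{j∈N} x_j² w_j²)^{p/2})^{1/p}`, valued in `[0,∞]`. -/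
def pwNorm (p : ℝ) (P : Set (Set α)) (W : α → ℝ) (x : α → ℝ) : ℝ≥0∞ :=
  (∑' N : P, (∑' j : N.1, ENNReal.ofReal ((x j.1) ^ 2 * (W j.1) ^ 2)) ^ (p / 2)) ^ (1 / p)

/-- A partition–weight pair on `α`. -/
abbrev PWPair (α : Type*) := Set (Set α) × (α → ℝ)

/-- Every member of the family is a genuine partition–weight pair. -/
def IsPWFamily (𝒞 : Set (PWPair α)) : Prop :=
  ∀ PW ∈ 𝒞, IsPartition PW.1 ∧ IsWeight PW.2

/-- `‖x‖_𝒞 = sup_{(P,W) ∈ 𝒞} ‖x‖_{P,W}`. -/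
def famNorm (p : ℝ) (𝒞 : Set (PWPair α)) (x : α → ℝ) : ℝ≥0∞ :=
  ⨆ PW ∈ 𝒞, pwNorm p PW.1 PW.2 x

/-- The block of the partition `Q` containing `b` (for a genuine partition this is
the unique element of `Q` containing `b`). -/
def blockOf (Q : Set (Set α)) (b : α) : Set α := ⋃₀ {q ∈ Q | b ∈ q}

/-- The partition `P(Q,T)` obtained from a partition `Q` and a choice `T` of a
partition–weight pair for each block of `Q`. -/
def envPartition (Q : Set (Set α)) (T : Set α → PWPair α) : Set (Set α) :=
  {K | K.Nonempty ∧ ∃ q ∈ Q, ∃ s ∈ (T q).1, K = q ∩ s}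

/-- The weight `W(Q,T)`: on the block `q` of `Q` it is the weight chosen by `T q`. -/
def envWeight (Q : Set (Set α)) (T : Set α → PWPair α) : α → ℝ :=
  fun b => (T (blockOf Q b)).2 b

/-- A family of partition–weight pairs satisfies the envelope property if it is
closed under the operation `(Q, T) ↦ (P(Q,T), W(Q,T))`. -/
def EnvelopeProp (𝒞 : Set (PWPair α)) : Prop :=
  ∀ Q : Set (Set α), IsPartition Q → ∀ T : Set α → PWPair α, (∀ q ∈ Q, T q ∈ 𝒞) →
    (envPartition Q T, envWeight Q T) ∈ 𝒞

/-- The family `𝒞̃` of all pairs `(P(Q,T), W(Q,T))`. -/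
def envFam (𝒞 : Set (PWPair α)) : Set (PWPair α) :=
  {PW | ∃ Q T, IsPartition Q ∧ (∀ q ∈ Q, T q ∈ 𝒞) ∧
    PW = (envPartition Q T, envWeight Q T)}

/-- The envelope norm generated by `𝒞`. -/
def envNorm (p : ℝ) (𝒞 : Set (PWPair α)) (x : α → ℝ) : ℝ≥0∞ := famNorm p (envFam 𝒞) x

/-- The two partition–weight pairs defining Rosenthal's space `X_{p,(w_n)}`:
the discrete partition with weight `1` and the indiscrete partition with weight `w`. -/
def rosFam (w : ℕ → ℝ) : Set (PWPair ℕ) :=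
  {((Set.range fun n : ℕ => ({n} : Set ℕ)), fun _ => (1 : ℝ)),
   (({Set.univ} : Set (Set ℕ)), w)}

/-! ### Auxiliary lemmas -/

/-- The first (discrete) Rosenthal pair. -/
def rosP1 : PWPair ℕ := ((Set.range fun n : ℕ => ({n} : Set ℕ)), fun _ => (1 : ℝ))

/-- The second (indiscrete) Rosenthal pair. -/
def rosP2 (w : ℕ → ℝ) : PWPair ℕ := (({Set.univ} : Set (Set ℕ)), w)

lemma rosFam_eq (w : ℕ → ℝ) : rosFam w = {rosP1, rosP2 w} := rfl

lemma rosP1_ne_rosP2 (w : ℕ → ℝ) : rosP1 ≠ rosP2 w := by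
  intro h
  have h0 : ({0} : Set ℕ) ∈ rosP1.1 := ⟨0, rfl⟩
  rw [h] at h0
  have h1 : ({0} : Set ℕ) = Set.univ := h0
  have h2 : (1 : ℕ) ∈ ({0} : Set ℕ) := h1 ▸ Set.mem_univ 1
  simp at h2

lemma blockOf_eq {Q : Set (Set α)} (hQ : IsPartition Q) {q : Set α} (hq : q ∈ Q)
    {b : α} (hb : b ∈ q) : blockOf Q b = q := by
  have h1 : {s ∈ Q | b ∈ s} = {q} := by
    ext s
    constructor
    · rintro ⟨hs, hbs⟩
      by_contra hne
      exact Set.disjoint_left.mp (hQ.2.1 hs hq hne) hbs hb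
    · rintro rfl; exact ⟨hq, hb⟩
  rw [blockOf, h1, Set.sUnion_singleton]

lemma tsum_rpow_le' {ι : Type*} {r : ℝ} (hr : 1 ≤ r) (f : ι → ℝ≥0∞) :
    ∑' i, f i ^ r ≤ (∑' i, f i) ^ r := by
  set S := ∑' i, f i with hS
  have hr0 : 0 ≤ r - 1 := by linarith
  have key : ∀ i, f i ^ r ≤ S ^ (r - 1) * f i := by
    intro i
    calc f i ^ r = f i ^ (r - 1 + 1) := by norm_num
      _ = f i ^ (r - 1) * f i ^ (1 : ℝ) := ENNReal.rpow_add_of_nonneg _ _ hr0 zero_le_one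
      _ = f i ^ (r - 1) * f i := by rw [ENNReal.rpow_one]
      _ ≤ S ^ (r - 1) * f i :=
        mul_le_mul_left (ENNReal.rpow_le_rpow (ENNReal.le_tsum i) hr0) _
  calc ∑' i, f i ^ r ≤ ∑' i, S ^ (r - 1) * f i := ENNReal.tsum_le_tsum key
    _ = S ^ (r - 1) * S := by rw [ENNReal.tsum_mul_left]
    _ = S ^ (r - 1) * S ^ (1 : ℝ) := by rw [ENNReal.rpow_one]
    _ = S ^ r := by rw [← ENNReal.rpow_add_of_nonneg _ _ hr0 zero_le_one]; norm_num

lemma tsum_tsum_le' {S : Set (Set α)} (hd : S.PairwiseDisjoint id)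
    {u : Set α} (hu : ∀ b ∈ S, b ⊆ u) (f : α → ℝ≥0∞) :
    ∑' b : S, ∑' j : (b : Set α), f j ≤ ∑' j : u, f j := by
  have h1 : ∑' x : (Σ b : S, ((b : Set α) : Type _)), f x.2
      = ∑' b : S, ∑' j : (b : Set α), f j :=
    ENNReal.tsum_sigma' (β := fun b : S => ((b : Set α) : Type _)) (fun x => f x.2.1)
  rw [← h1]
  refine ENNReal.summable.tsum_le_tsum_of_inj (fun x => (⟨x.2.1, hu x.1.1 x.1.2 x.2.2⟩ : u)) ?_
    (fun _ _ => zero_le) (fun _ => le_rfl) ENNReal.summable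
  rintro ⟨⟨b1, hb1⟩, ⟨j1, hj1⟩⟩ ⟨⟨b2, hb2⟩, ⟨j2, hj2⟩⟩ h
  simp only [Subtype.mk.injEq] at h
  subst h
  have hb : b1 = b2 := by
    by_contra hne
    exact Set.disjoint_left.mp (hd hb1 hb2 hne) hj1 hj2
  subst hb
  rfl

lemma ofReal_sq_rpow' {x : ℝ} {p : ℝ} (hp : 0 ≤ p) :
    ENNReal.ofReal (x ^ 2) ^ (p / 2) = ENNReal.ofReal (|x| ^ p) := by
  rw [ENNReal.ofReal_rpow_of_nonneg (sq_nonneg x) (by positivity)]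
  congr 1
  rw [← sq_abs, ← Real.rpow_natCast |x| 2, ← Real.rpow_mul (abs_nonneg x)]
  push_cast
  ring_nf

/-- The envelope norm generated by the two pairs defining Rosenthal's
space `X_{p,(w_n)}` is
`|||a||| = sup_{q ⊆ ℕ} (Σ_{n∈q} |a_n|^p + (Σ_{n∉q} a_n² w_n²)^{p/2})^{1/p}`. -/
theorem statement15 (p : ℝ) (hp : 2 < p) (w : ℕ → ℝ) (hw : IsWeight w) (a : ℕ → ℝ) :
    envNorm p (rosFam w) a =
      ⨆ q : Set ℕ,
        (∑' n : q, ENNReal.ofReal (|a n.1| ^ p) +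
          (∑' n : ↥qᶜ, ENNReal.ofReal ((a n.1) ^ 2 * (w n.1) ^ 2)) ^ (p / 2)) ^ (1 / p) := by
  classical
  have hp0 : (0 : ℝ) < p := by linarith
  have hp2 : (1 : ℝ) ≤ p / 2 := by linarith
  have hinv : (0 : ℝ) ≤ 1 / p := by positivity
  apply le_antisymm
  · -- envelope norm ≤ sup over q
    simp only [envNorm, famNorm]
    refine iSup₂_le ?_
    rintro PW ⟨Q, T, hQ, hT, rfl⟩
    simp only [pwNorm]
    set q0 : Set ℕ := {n | T (blockOf Q n) = rosP1} with hq0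
    have hblk : ∀ n : ℕ, blockOf Q n ∈ Q ∧ n ∈ blockOf Q n := by
      intro n
      have hmem : n ∈ ⋃₀ Q := hQ.2.2.symm ▸ Set.mem_univ n
      obtain ⟨q, hq, hnq⟩ := hmem
      rw [blockOf_eq hQ hq hnq]
      exact ⟨hq, hnq⟩
    have hTmem : ∀ q ∈ Q, T q = rosP1 ∨ T q = rosP2 w := by
      intro q hq
      have := hT q hq
      rw [rosFam_eq] at this
      simpa [Set.mem_insert_iff] using this
    have hw1 : ∀ n ∈ q0, envWeight Q T n = 1 := by
      intro n hn
      have hn' : T (blockOf Q n) = rosP1 := hn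
      simp only [envWeight]
      rw [hn']
      rfl
    have hw2 : ∀ n, n ∉ q0 → envWeight Q T n = w n := by
      intro n hn
      have h2 : T (blockOf Q n) = rosP2 w :=
        (hTmem _ (hblk n).1).resolve_left hn
      simp only [envWeight]
      rw [h2]
      rfl
    refine le_trans ?_ (le_iSup _ q0)
    refine ENNReal.rpow_le_rpow ?_ hinv
    set S₁ : Set (Set ℕ) := (fun n : ℕ => ({n} : Set ℕ)) '' q0 with hS₁
    set S₂ : Set (Set ℕ) := {b | b ∈ Q ∧ T b = rosP2 w} with hS₂
    have hsub : envPartition Q T ⊆ S₁ ∪ S₂ := by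
      rintro K ⟨hKne, q, hq, s, hs, rfl⟩
      rcases hTmem q hq with h1 | h2
      · rw [h1] at hs
        obtain ⟨m, rfl⟩ := (show ∃ m : ℕ, ({m} : Set ℕ) = s from hs)
        obtain ⟨x, hx⟩ := hKne
        have hxm : x = m := hx.2
        subst hxm
        have hmq : x ∈ q := hx.1
        have hKeq : q ∩ {x} = {x} :=
          Set.inter_eq_self_of_subset_right (Set.singleton_subset_iff.mpr hmq)
        rw [hKeq]
        exact Or.inl ⟨x, by rw [hq0, Set.mem_setOf_eq, blockOf_eq hQ hq hmq]; exact h1, rfl⟩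
      · rw [h2] at hs
        have hs' : s = Set.univ := hs
        subst hs'
        rw [Set.inter_univ]
        exact Or.inr ⟨hq, h2⟩
    refine le_trans (ENNReal.tsum_mono_subtype
      (fun K : Set ℕ => (∑' j : ↥K, ENNReal.ofReal ((a (↑j : ℕ)) ^ 2 * (envWeight Q T (↑j : ℕ)) ^ 2)) ^ (p / 2))
      hsub) ?_
    refine le_trans (ENNReal.tsum_union_le
      (fun K : Set ℕ => (∑' j : ↥K, ENNReal.ofReal ((a (↑j : ℕ)) ^ 2 * (envWeight Q T (↑j : ℕ)) ^ 2)) ^ (p / 2))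
      S₁ S₂) ?_
    refine add_le_add ?_ ?_
    · -- sum over S₁
      have e1 : ∑' K : S₁,
          (∑' j : (K : Set ℕ), ENNReal.ofReal ((a j.1) ^ 2 * (envWeight Q T j.1) ^ 2)) ^ (p / 2)
          = ∑' n : q0,
          (∑' j : ({n.1} : Set ℕ), ENNReal.ofReal ((a j.1) ^ 2 * (envWeight Q T j.1) ^ 2)) ^ (p / 2) :=
        tsum_image (g := fun n : ℕ => ({n} : Set ℕ))
          (fun K : Set ℕ => (∑' j : ↥K,
            ENNReal.ofReal ((a (↑j : ℕ)) ^ 2 * (envWeight Q T (↑j : ℕ)) ^ 2)) ^ (p / 2))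
          (fun x _ y _ h => Set.singleton_injective h)
      rw [e1]
      refine le_of_eq (tsum_congr fun n => ?_)
      rw [tsum_singleton n.1 (fun j => ENNReal.ofReal ((a j) ^ 2 * (envWeight Q T j) ^ 2))]
      rw [hw1 n.1 n.2]
      simp only [one_pow, mul_one]
      exact ofReal_sq_rpow' hp0.le
    · -- sum over S₂
      refine le_trans (tsum_rpow_le' hp2 _) ?_
      refine ENNReal.rpow_le_rpow ?_ (by positivity)
      have hd : S₂.PairwiseDisjoint id := hQ.2.1.subset (fun b hb => hb.1)
      have hu : ∀ b ∈ S₂, b ⊆ q0ᶜ := by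
        rintro b ⟨hbQ, hb2⟩ n hn
        intro hmem
        have h1 : T (blockOf Q n) = rosP1 := hmem
        rw [blockOf_eq hQ hbQ hn] at h1
        exact rosP1_ne_rosP2 w (h1.symm.trans hb2)
      refine le_trans (tsum_tsum_le' hd hu (fun j => ENNReal.ofReal ((a j) ^ 2 * (envWeight Q T j) ^ 2))) ?_
      refine le_of_eq (tsum_congr fun n => ?_)
      rw [hw2 n.1 n.2]
  · -- sup over q ≤ envelope norm
    refine iSup_le fun q => ?_
    set Q : Set (Set ℕ) := ((fun n : ℕ => ({n} : Set ℕ)) '' q) ∪ {s | s = qᶜ ∧ qᶜ.Nonempty}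
      with hQdef
    set T : Set ℕ → PWPair ℕ := fun s => if s = qᶜ then rosP2 w else rosP1 with hTdef
    have hQpart : IsPartition Q := by
      refine ⟨?_, ?_, ?_⟩
      · rintro N (⟨n, _, rfl⟩ | ⟨rfl, hne⟩)
        · exact ⟨n, rfl⟩
        · exact hne
      · rintro s (⟨n, hn, rfl⟩ | ⟨rfl, _⟩) t (⟨m, hm, rfl⟩ | ⟨rfl, _⟩) hst
        · simp only [id]
          exact Set.disjoint_singleton.mpr (fun h => hst (by rw [h]))
        · simp only [id]
          exact Set.disjoint_singleton_left.mpr (by simpa using hn)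
        · simp only [id]
          exact (Set.disjoint_singleton_left.mpr (by simpa using hm)).symm
        · exact absurd rfl hst
      · rw [Set.eq_univ_iff_forall]
        intro x
        by_cases hx : x ∈ q
        · exact ⟨{x}, Or.inl ⟨x, hx, rfl⟩, rfl⟩
        · exact ⟨qᶜ, Or.inr ⟨rfl, ⟨x, hx⟩⟩, hx⟩
    have hTq : ∀ s ∈ Q, T s ∈ rosFam w := by
      intro s _
      by_cases h : s = qᶜ
      · simp only [hTdef, h, if_pos rfl]
        exact Set.mem_insert_of_mem _ rfl
      · simp only [hTdef, if_neg h]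
        exact Set.mem_insert _ _
    have hmem : (envPartition Q T, envWeight Q T) ∈ envFam (rosFam w) :=
      ⟨Q, T, hQpart, hTq, rfl⟩
    have hle : pwNorm p (envPartition Q T) (envWeight Q T) a ≤ envNorm p (rosFam w) a := by
      simp only [envNorm, famNorm]
      exact le_iSup₂_of_le _ hmem le_rfl
    refine le_trans ?_ hle
    simp only [pwNorm]
    refine ENNReal.rpow_le_rpow ?_ hinv
    -- weights on the two parts
    have hsingQ : ∀ n ∈ q, ({n} : Set ℕ) ∈ Q := fun n hn => Or.inl ⟨n, hn, rfl⟩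
    have hTsing : ∀ n ∈ q, T {n} = rosP1 := by
      intro n hn
      have hne : ({n} : Set ℕ) ≠ qᶜ := fun h => ((Set.ext_iff.mp h n).mp rfl) hn
      simp only [hTdef, if_neg hne]
    have hwq : ∀ n ∈ q, envWeight Q T n = 1 := by
      intro n hn
      simp only [envWeight]
      rw [blockOf_eq hQpart (hsingQ n hn) rfl, hTsing n hn]
      rfl
    have hwqc : ∀ n ∈ qᶜ, envWeight Q T n = w n := by
      intro n hn
      have hQc : qᶜ ∈ Q := Or.inr ⟨rfl, ⟨n, hn⟩⟩
      simp only [envWeight]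
      have hTc : T qᶜ = rosP2 w := by simp only [hTdef, if_pos rfl]
      rw [blockOf_eq hQpart hQc hn, hTc]
      rfl
    -- the two families of blocks inside envPartition Q T
    set S₁ : Set (Set ℕ) := (fun n : ℕ => ({n} : Set ℕ)) '' q with hS₁
    set S₂ : Set (Set ℕ) := {s | s = qᶜ ∧ qᶜ.Nonempty} with hS₂
    have hsub2 : S₁ ∪ S₂ ⊆ envPartition Q T := by
      rintro K (⟨n, hn, rfl⟩ | ⟨rfl, hne⟩)
      · refine ⟨⟨n, rfl⟩, {n}, hsingQ n hn, {n}, ?_, (Set.inter_self _).symm⟩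
        rw [hTsing n hn]
        exact ⟨n, rfl⟩
      · refine ⟨hne, qᶜ, Or.inr ⟨rfl, hne⟩, Set.univ, ?_, (Set.inter_univ _).symm⟩
        have hTc : T qᶜ = rosP2 w := by simp only [hTdef, if_pos rfl]
        rw [hTc]
        rfl
    have hdisj : Disjoint S₁ S₂ := by
      rw [Set.disjoint_left]
      rintro K ⟨n, hn, rfl⟩ ⟨hK, _⟩
      exact ((Set.ext_iff.mp hK n).mp rfl) hn
    refine le_trans ?_ (ENNReal.tsum_mono_subtype
      (fun K : Set ℕ => (∑' j : ↥K, ENNReal.ofReal ((a (↑j : ℕ)) ^ 2 * (envWeight Q T (↑j : ℕ)) ^ 2)) ^ (p / 2))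
      hsub2)
    rw [ENNReal.summable.tsum_union_disjoint (f := fun K : Set ℕ =>
        (∑' j : ↥K, ENNReal.ofReal ((a (↑j : ℕ)) ^ 2 * (envWeight Q T (↑j : ℕ)) ^ 2)) ^ (p / 2))
      hdisj ENNReal.summable]
    refine add_le_add ?_ ?_
    · -- singleton part
      have e1 : ∑' K : S₁,
          (∑' j : (K : Set ℕ), ENNReal.ofReal ((a j.1) ^ 2 * (envWeight Q T j.1) ^ 2)) ^ (p / 2)
          = ∑' n : q,
          (∑' j : ({n.1} : Set ℕ), ENNReal.ofReal ((a j.1) ^ 2 * (envWeight Q T j.1) ^ 2)) ^ (p / 2) :=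
        tsum_image (g := fun n : ℕ => ({n} : Set ℕ))
          (fun K : Set ℕ => (∑' j : ↥K,
            ENNReal.ofReal ((a (↑j : ℕ)) ^ 2 * (envWeight Q T (↑j : ℕ)) ^ 2)) ^ (p / 2))
          (fun x _ y _ h => Set.singleton_injective h)
      rw [e1]
      refine le_of_eq (tsum_congr fun n => ?_)
      rw [tsum_singleton n.1 (fun j => ENNReal.ofReal ((a j) ^ 2 * (envWeight Q T j) ^ 2))]
      rw [hwq n.1 n.2]
      simp only [one_pow, mul_one]
      exact (ofReal_sq_rpow' hp0.le).symm
    · -- complement part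
      by_cases hne : qᶜ.Nonempty
      · have hS₂eq : S₂ = {qᶜ} := by
          ext s
          simp only [hS₂, Set.mem_setOf_eq, Set.mem_singleton_iff]
          exact ⟨fun h => h.1, fun h => ⟨h, hne⟩⟩
        rw [hS₂eq, tsum_singleton (qᶜ) (fun K : Set ℕ =>
          (∑' j : ↥K, ENNReal.ofReal ((a (↑j : ℕ)) ^ 2 * (envWeight Q T (↑j : ℕ)) ^ 2)) ^ (p / 2))]
        refine ENNReal.rpow_le_rpow (le_of_eq (tsum_congr fun n => ?_)) (by positivity)
        rw [hwqc n.1 n.2]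
      · rw [Set.not_nonempty_iff_eq_empty] at hne
        rw [hne, tsum_empty, ENNReal.zero_rpow_of_pos (by linarith)]
        exact zero_le
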